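/- Let (d_n)_{n≥1} be the sequence with d_n = 3^{-i} whenever 2^{i-1} ≤ n < 2^i (i ≥ 1), and let S be the unique continuous linear operator on the real Banach space ℓ¹ satisfying S e_1 = −3 Σ_{n≥1} d_n e_n and S e_n = 3 e_{⌊n/2⌋} for all n ≥ 2 (here (e_n) is the canonical basis of ℓ¹). Then for any pairwise distinct positive integers m_1,…,m_N, the operators S^{m_1},…,S^{m_N} are disjoint mixing on ℓ¹: for all nonempty open sets U_0,U_1,…,U_N ⊆ ℓ¹, the set { m ∈ ℕ : U_0 ∩ (S^{m_1})⁻ᵐ(U_1) ∩ … ∩ (S^{m_N})⁻ᵐ(U_N) ≠ ∅ } is cofinite in ℕ. -/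

import Mathlib

/-- The canonical unit vectors `eVec n` (for `n ≥ 1`) of the real Banach space
`ℓ¹ = ℓ¹(ℕ⁺, ℝ)` of absolutely summable real sequences. -/
noncomputable def eVec (n : ℕ+) : lp (fun _ : ℕ+ => ℝ) 1 := lp.single 1 n 1

namespace Stmt11

open Function Filter

abbrev E : Type := lp (fun _ : ℕ+ => ℝ) 1

lemma norm_eVec (n : ℕ+) : ‖eVec n‖ = 1 := by
  have := lp.norm_single (p := 1) (E := fun _ : ℕ+ => ℝ) (by norm_num) n (1:ℝ)
  simpa [eVec] using this

lemma smul_eVec (n : ℕ+) (c : ℝ) : c • eVec n = lp.single 1 n c := by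
  rw [eVec, ← lp.single_smul, smul_eq_mul, mul_one]

lemma norm_smul_eVec (n : ℕ+) (c : ℝ) : ‖c • eVec n‖ = |c| := by
  rw [norm_smul, norm_eVec, mul_one, Real.norm_eq_abs]

/-- size of a positive natural -/
def sz (n : ℕ+) : ℕ := Nat.size (n : ℕ)

lemma sz_pos (n : ℕ+) : 1 ≤ sz n := Nat.size_pos.mpr n.pos

lemma sz_one : sz 1 = 1 := Nat.size_one

lemma two_le_coe {n : ℕ+} (h : n ≠ 1) : 2 ≤ (n : ℕ) := by
  have h1 : 1 ≤ (n : ℕ) := n.pos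
  have h2 : (n : ℕ) ≠ 1 := by
    intro hc
    exact h (PNat.coe_injective (by simp [hc]))
  omega

lemma lb_sz (n : ℕ+) : 2 ^ (sz n - 1) ≤ (n : ℕ) := by
  by_contra hc
  push_neg at hc
  have := Nat.size_le.mpr hc
  have := sz_pos n
  unfold sz at *
  omega

lemma ub_sz (n : ℕ+) : (n : ℕ) < 2 ^ sz n := Nat.lt_size_self _

def half (n : ℕ+) : ℕ+ := ⟨max 1 ((n : ℕ) / 2), lt_of_lt_of_le one_pos (le_max_left _ _)⟩

lemma half_coe {n : ℕ+} (h : 2 ≤ (n : ℕ)) : ((half n : ℕ+) : ℕ) = (n : ℕ) / 2 := by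
  have : 1 ≤ (n : ℕ) / 2 := (Nat.one_le_div_iff (by norm_num)).mpr h
  simp only [half, PNat.mk_coe]
  omega

lemma coe_two_mul (k : ℕ+) : ((2 * k : ℕ+) : ℕ) = 2 * (k : ℕ) := by
  simp

lemma coe_two_mul_add_one (k : ℕ+) : ((2 * k + 1 : ℕ+) : ℕ) = 2 * (k : ℕ) + 1 := by
  simp

lemma half_two_mul (k : ℕ+) : half (2 * k) = k := by
  apply PNat.coe_injective
  rw [half_coe (by rw [coe_two_mul]; have := k.pos; omega), coe_two_mul]
  omega

lemma half_two_mul_add_one (k : ℕ+) : half (2 * k + 1) = k := by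
  apply PNat.coe_injective
  have := k.pos
  rw [half_coe (by rw [coe_two_mul_add_one]; omega), coe_two_mul_add_one]
  omega

lemma size_double (k : ℕ) (hk : k ≠ 0) : Nat.size (2 * k) = Nat.size k + 1 := by
  have h := Nat.size_bit (b := false) (n := k) (by simp [Nat.bit_false]; omega)
  simpa [Nat.bit_false] using h

lemma size_double_add_one (k : ℕ) : Nat.size (2 * k + 1) = Nat.size k + 1 := by
  have h := Nat.size_bit (b := true) (n := k) (by simp [Nat.bit_true])
  simpa [Nat.bit_true] using h

lemma size_half {n : ℕ+} (h : 2 ≤ (n : ℕ)) :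
    Nat.size ((half n : ℕ+) : ℕ) + 1 = Nat.size (n : ℕ) := by
  rw [half_coe h]
  rcases Nat.even_or_odd (n : ℕ) with he | ho
  · obtain ⟨k, hk⟩ := he
    have hk' : (n : ℕ) = 2 * k := by omega
    rw [hk', Nat.mul_div_cancel_left _ (by norm_num), ← size_double k (by omega)]
  · obtain ⟨k, hk⟩ := ho
    rw [hk]
    have : (2 * k + 1) / 2 = k := by omega
    rw [this, ← size_double_add_one k]

noncomputable def vv (d : ℕ+ → ℝ) : E := ∑' n : ℕ+, d n • eVec n

section
variable {d : ℕ+ → ℝ}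
variable (hd : ∀ (i : ℕ) (n : ℕ+), 1 ≤ i → 2 ^ (i - 1) ≤ (n : ℕ) → (n : ℕ) < 2 ^ i →
      d n = ((3 : ℝ) ^ i)⁻¹)
include hd

lemma dval (n : ℕ+) : d n = ((3 : ℝ) ^ sz n)⁻¹ :=
  hd (sz n) n (sz_pos n) (lb_sz n) (ub_sz n)

lemma d_pos (n : ℕ+) : 0 < d n := by
  rw [dval hd]
  positivity

omit hd in
lemma rpow_bound : (2:ℝ) ^ ((3:ℝ)/2) ≤ 3 := by
  have ha : (0:ℝ) ≤ (2:ℝ) ^ ((3:ℝ)/2) := Real.rpow_nonneg (by norm_num) _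
  have ha2 : ((2:ℝ) ^ ((3:ℝ)/2)) ^ (2:ℕ) = 8 := by
    rw [← Real.rpow_natCast ((2:ℝ) ^ ((3:ℝ)/2)) 2, ← Real.rpow_mul (by norm_num)]
    have h3 : ((3:ℝ)/2) * ((2:ℕ):ℝ) = ((3:ℕ):ℝ) := by norm_num
    rw [h3, Real.rpow_natCast]
    norm_num
  nlinarith [ha, ha2]

lemma d_le (n : ℕ+) : d n ≤ (((n:ℕ):ℝ) ^ ((3:ℝ)/2))⁻¹ := by
  rw [dval hd]
  have hn1 : (1:ℝ) ≤ ((n:ℕ):ℝ) := by exact_mod_cast n.pos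
  have hpow : ((n:ℕ):ℝ) ^ ((3:ℝ)/2) ≤ (3:ℝ) ^ sz n := by
    calc ((n:ℕ):ℝ) ^ ((3:ℝ)/2) ≤ (((2:ℝ) ^ sz n)) ^ ((3:ℝ)/2) := by
          apply Real.rpow_le_rpow (by linarith) ?_ (by norm_num)
          exact_mod_cast (ub_sz n).le
      _ = ((2:ℝ) ^ ((3:ℝ)/2)) ^ sz n := by
          rw [← Real.rpow_natCast (2:ℝ) (sz n), ← Real.rpow_mul (by norm_num),
            mul_comm, Real.rpow_mul (by norm_num), Real.rpow_natCast]
      _ ≤ (3:ℝ) ^ sz n := by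
          exact pow_le_pow_left₀ (Real.rpow_nonneg (by norm_num) _) rpow_bound _
  exact inv_anti₀ (by positivity) hpow

lemma summable_d : Summable d := by
  apply Summable.of_nonneg_of_le (fun n => (d_pos hd n).le) (d_le hd)
  have h : Summable (fun n : ℕ => (((n:ℕ):ℝ) ^ ((3:ℝ)/2))⁻¹) :=
    Real.summable_nat_rpow_inv.mpr (by norm_num)
  exact h.comp_injective PNat.coe_injective

lemma summable_dsmul : Summable (fun n : ℕ+ => d n • eVec n) := by
  apply Summable.of_norm
  have : (fun n : ℕ+ => ‖d n • eVec n‖) = d := by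
    funext n
    rw [norm_smul_eVec, abs_of_pos (d_pos hd n)]
  rw [this]
  exact summable_d hd

end

section
variable {d : ℕ+ → ℝ} {S : E →L[ℝ] E}
variable (hd : ∀ (i : ℕ) (n : ℕ+), 1 ≤ i → 2 ^ (i - 1) ≤ (n : ℕ) → (n : ℕ) < 2 ^ i →
      d n = ((3 : ℝ) ^ i)⁻¹)


include hd

lemma three_d_double (k : ℕ+) : 3 * d (2 * k) = d k := by
  rw [dval hd, dval hd]
  have hs : sz (2 * k) = sz k + 1 := by
    unfold sz; rw [coe_two_mul, size_double _ (by have := k.pos; omega)]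
  rw [hs, pow_succ]
  have h3 : (3:ℝ) ^ sz k ≠ 0 := by positivity
  field_simp

lemma three_d_double_add_one (k : ℕ+) : 3 * d (2 * k + 1) = d k := by
  rw [dval hd, dval hd]
  have hs : sz (2 * k + 1) = sz k + 1 := by
    unfold sz; rw [coe_two_mul_add_one, size_double_add_one]
  rw [hs, pow_succ]
  have h3 : (3:ℝ) ^ sz k ≠ 0 := by positivity
  field_simp

variable (hS1 : S (eVec 1) = (-3 : ℝ) • ∑' n : ℕ+, d n • eVec n)
variable (hSn : ∀ n k : ℕ+, 2 ≤ (n : ℕ) → (k : ℕ) = (n : ℕ) / 2 →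
      S (eVec n) = (3 : ℝ) • eVec k)


omit hd in
include hSn in
lemma hSn' {n : ℕ+} (h : n ≠ 1) : S (eVec n) = (3 : ℝ) • eVec (half n) := by
  have h2 := two_le_coe h
  refine hSn n (half n) h2 ?_
  show ((half n : ℕ+) : ℕ) = (n : ℕ) / 2
  have : 1 ≤ (n : ℕ) / 2 := (Nat.one_le_div_iff (by norm_num)).mpr h2
  simp only [half, PNat.mk_coe]
  omega

include hS1 hSn in
lemma S_fixed : S (vv d) = vv d := by
  classical
  set v : E := vv d with hvdef
  have hsum := summable_dsmul hd
  have hv : HasSum (fun n : ℕ+ => d n • eVec n) v := hsum.hasSum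
  -- G : the shifted part
  set G : ℕ+ → E := fun n => if n = 1 then 0 else (3 * d n) • eVec (half n) with hG
  set Gev : ℕ+ → E := fun n => if 2 ∣ (n:ℕ) then G n else 0 with hGev
  set God : ℕ+ → E := fun n => if 2 ∣ (n:ℕ) ∨ n = 1 then 0 else G n with hGod
  have hGsplit : ∀ n, G n = Gev n + God n := by
    intro n
    by_cases h1 : n = 1
    · subst h1
      simp [hGev, hGod, hG]
    · by_cases h2 : 2 ∣ (n:ℕ) <;> simp [hGev, hGod, h2, h1]
  -- even part
  have hGev_sum : HasSum Gev v := by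
    have hi : Function.Injective (fun k : ℕ+ => 2 * k) := by
      intro a b hab
      exact mul_left_cancel hab
    have hvan : ∀ n : ℕ+, n ∉ Set.range (fun k : ℕ+ => 2 * k) → Gev n = 0 := by
      intro n hn
      rw [hGev]
      simp only
      rw [if_neg]
      intro ⟨c, hc⟩
      have hnp := n.pos
      have hc1 : 1 ≤ c := by omega
      apply hn
      refine ⟨⟨c, by omega⟩, ?_⟩
      apply PNat.coe_injective
      show 2 * c = (n:ℕ)
      omega
    rw [← hi.hasSum_iff hvan]
    have : (Gev ∘ fun k : ℕ+ => 2 * k) = fun n : ℕ+ => d n • eVec n := by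
      funext k
      have h2k : (2 * k : ℕ+) ≠ 1 := by
        intro hc
        have h := congrArg (fun x : ℕ+ => (x : ℕ)) hc
        simp only [coe_two_mul, PNat.one_coe] at h
        have := k.pos
        omega
      simp only [comp_apply, hGev, hG]
      rw [if_pos (by rw [coe_two_mul]; exact ⟨k, rfl⟩), if_neg h2k, half_two_mul,
        three_d_double hd]
    rwa [this]
  -- odd part
  have hGod_sum : HasSum God v := by
    have hi : Function.Injective (fun k : ℕ+ => 2 * k + 1) := by
      intro a b hab
      have h := congrArg (fun x : ℕ+ => (x : ℕ)) hab
      simp only [coe_two_mul_add_one] at h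
      exact PNat.coe_injective (by omega)
    have hvan : ∀ n : ℕ+, n ∉ Set.range (fun k : ℕ+ => 2 * k + 1) → God n = 0 := by
      intro n hn
      rw [hGod]
      simp only
      rw [if_pos]
      by_contra hc
      push_neg at hc
      obtain ⟨hc1, hc2⟩ := hc
      have h2 := two_le_coe hc2
      have hodd : ¬ 2 ∣ (n:ℕ) := hc1
      obtain ⟨c, hcc⟩ : ∃ c, (n:ℕ) = 2 * c + 1 := by
        rcases Nat.even_or_odd (n:ℕ) with he | ho
        · exact absurd (even_iff_two_dvd.mp he) hodd
        · obtain ⟨c, hcc⟩ := ho; exact ⟨c, by omega⟩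
      have hc1' : 1 ≤ c := by omega
      exact absurd ⟨⟨c, by omega⟩, PNat.coe_injective (by show 2 * c + 1 = (n:ℕ); omega)⟩ hn
    rw [← hi.hasSum_iff hvan]
    have : (God ∘ fun k : ℕ+ => 2 * k + 1) = fun n : ℕ+ => d n • eVec n := by
      funext k
      have hne : ¬ (2 ∣ ((2 * k + 1 : ℕ+):ℕ) ∨ (2 * k + 1 : ℕ+) = 1) := by
        push_neg
        constructor
        · rw [coe_two_mul_add_one]; omega
        · intro hc
          have h := congrArg (fun x : ℕ+ => (x : ℕ)) hc
          simp only [coe_two_mul_add_one, PNat.one_coe] at h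
          have := k.pos
          omega
      have h2k : (2 * k + 1 : ℕ+) ≠ 1 := by
        intro hc; exact hne (Or.inr hc)
      simp only [comp_apply, hGod, hG]
      rw [if_neg hne, if_neg h2k, half_two_mul_add_one, three_d_double_add_one hd]
    rwa [this]
  have hGsum : HasSum G (v + v) := by
    have := hGev_sum.add hGod_sum
    have heq : (fun n => Gev n + God n) = G := by funext n; rw [hGsplit]
    rwa [heq] at this
  have hone : HasSum (fun n : ℕ+ => if n = 1 then -v else 0) (-v) := hasSum_ite_eq 1 (-v)
  have hF : HasSum (fun n : ℕ+ => (if n = 1 then -v else 0) + G n) (-v + (v + v)) :=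
    hone.add hGsum
  have hFS : HasSum (fun n : ℕ+ => S (d n • eVec n)) (S v) := S.hasSum hv
  have hfe : (fun n : ℕ+ => S (d n • eVec n)) =
      fun n : ℕ+ => (if n = 1 then -v else 0) + G n := by
    funext n
    by_cases h1 : n = 1
    · subst h1
      rw [map_smul, hS1]
      have hd1 : d 1 = (3:ℝ)⁻¹ := by
        rw [dval hd, sz_one]; norm_num
      have htv : (∑' n : ℕ+, d n • eVec n) = v := by rw [hvdef]; rfl
      rw [htv]
      simp only [hG, if_pos rfl, add_zero]
      rw [hd1, smul_smul]
      norm_num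
    · rw [map_smul, hSn' hSn h1]
      simp only [hG, if_neg h1]
      rw [smul_smul, zero_add, mul_comm]
  rw [hfe] at hFS
  have := hFS.unique hF
  rw [this]
  abel

end

section
variable {d : ℕ+ → ℝ} {S : E →L[ℝ] E}
variable (hd : ∀ (i : ℕ) (n : ℕ+), 1 ≤ i → 2 ^ (i - 1) ≤ (n : ℕ) → (n : ℕ) < 2 ^ i →
      d n = ((3 : ℝ) ^ i)⁻¹)
variable (hS1 : S (eVec 1) = (-3 : ℝ) • ∑' n : ℕ+, d n • eVec n)
variable (hSn : ∀ n k : ℕ+, 2 ≤ (n : ℕ) → (k : ℕ) = (n : ℕ) / 2 →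
      S (eVec n) = (3 : ℝ) • eVec k)


include hd hS1 hSn

lemma S_pow_fixed (k : ℕ) : (S ^ k) (vv d) = vv d := by
  induction k with
  | zero => simp
  | succ k ih =>
    rw [pow_succ', ContinuousLinearMap.mul_apply, ih, S_fixed hd hS1 hSn]

lemma lemA : ∀ (s : ℕ) (n : ℕ+), sz n = s → (S ^ s) (eVec n) = (-((3:ℝ) ^ s)) • vv d := by
  intro s
  induction s with
  | zero => intro n hn; have := sz_pos n; omega
  | succ s ih =>
    intro n hn
    by_cases h1 : n = 1
    · subst h1
      have hs0 : s = 0 := by have := sz_one; omega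
      subst hs0
      rw [pow_one]
      have hv : (∑' n : ℕ+, d n • eVec n) = vv d := rfl
      rw [hS1, hv]
      norm_num
    · have h2 := two_le_coe h1
      have hszh : sz (half n) = s := by
        have := size_half h2
        unfold sz at *
        omega
      rw [pow_succ, ContinuousLinearMap.mul_apply, hSn' hSn h1, map_smul,
        ih (half n) hszh, smul_smul]
      rw [show (3:ℝ) * -(3:ℝ)^s = -(3:ℝ)^(s+1) by ring]

lemma lemC (n : ℕ+) (k : ℕ) (h : sz n ≤ k) :
    (S ^ k) (eVec n) = (-((3:ℝ) ^ sz n)) • vv d := by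
  induction k, h using Nat.le_induction with
  | base => exact lemA hd hS1 hSn (sz n) n rfl
  | succ k hk ih =>
    rw [pow_succ', ContinuousLinearMap.mul_apply, ih, map_smul, S_fixed hd hS1 hSn]

omit hd hS1 in
lemma lemD : ∀ (j : ℕ) (n : ℕ+), (S ^ j) (eVec (n * 2 ^ j)) = ((3:ℝ) ^ j) • eVec n := by
  intro j
  induction j with
  | zero => intro n; simp
  | succ j ih =>
    intro n
    have hco : ((n * 2 ^ (j+1) : ℕ+) : ℕ) = (n : ℕ) * 2 ^ (j + 1) := by
      push_cast
      ring
    have hco' : ((n * 2 ^ j : ℕ+) : ℕ) = (n : ℕ) * 2 ^ j := by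
      push_cast
      ring
    have h2 : 2 ≤ ((n * 2 ^ (j+1) : ℕ+) : ℕ) := by
      rw [hco]
      have := n.pos
      have : 2 ≤ 2 ^ (j + 1) := by
        calc 2 = 2^1 := by norm_num
        _ ≤ 2 ^ (j+1) := Nat.pow_le_pow_right (by norm_num) (by omega)
      nlinarith
    have hdiv : ((n * 2 ^ j : ℕ+) : ℕ) = ((n * 2 ^ (j+1) : ℕ+) : ℕ) / 2 := by
      rw [hco, hco', pow_succ, ← mul_assoc]
      omega
    rw [pow_succ, ContinuousLinearMap.mul_apply, hSn _ _ h2 hdiv, map_smul, ih,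
      smul_smul, ← pow_succ']

end

noncomputable def tvec (S : E →L[ℝ] E) (F : Finset ℕ+) (a : ℕ+ → ℝ) (k : ℕ) : E :=
  ∑ n ∈ F, (((3:ℝ) ^ k)⁻¹ * a n) • eVec (n * 2 ^ k)

section
variable {d : ℕ+ → ℝ} {S : E →L[ℝ] E}
variable (hd : ∀ (i : ℕ) (n : ℕ+), 1 ≤ i → 2 ^ (i - 1) ≤ (n : ℕ) → (n : ℕ) < 2 ^ i →
      d n = ((3 : ℝ) ^ i)⁻¹)
variable (hS1 : S (eVec 1) = (-3 : ℝ) • ∑' n : ℕ+, d n • eVec n)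
variable (hSn : ∀ n k : ℕ+, 2 ≤ (n : ℕ) → (k : ℕ) = (n : ℕ) / 2 →
      S (eVec n) = (3 : ℝ) • eVec k)


lemma tvec_zero (F : Finset ℕ+) (a : ℕ+ → ℝ) :
    tvec S F a 0 = ∑ n ∈ F, a n • eVec n := by
  simp [tvec]

lemma norm_tvec (F : Finset ℕ+) (a : ℕ+ → ℝ) (k : ℕ) :
    ‖tvec S F a k‖ ≤ ((3:ℝ) ^ k)⁻¹ * ∑ n ∈ F, |a n| := by
  calc ‖tvec S F a k‖ ≤ ∑ n ∈ F, ‖(((3:ℝ) ^ k)⁻¹ * a n) • eVec (n * 2 ^ k)‖ :=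
        norm_sum_le _ _
    _ = ∑ n ∈ F, ((3:ℝ) ^ k)⁻¹ * |a n| := by
        refine Finset.sum_congr rfl fun n _ => ?_
        rw [norm_smul_eVec, abs_mul, abs_of_pos (by positivity)]
    _ = ((3:ℝ) ^ k)⁻¹ * ∑ n ∈ F, |a n| := by rw [Finset.mul_sum]

include hSn in
lemma S_pow_tvec (F : Finset ℕ+) (a : ℕ+ → ℝ) (j k : ℕ) :
    (S ^ j) (tvec S F a (j + k)) = tvec S F a k := by
  rw [tvec, map_sum, tvec]
  refine Finset.sum_congr rfl fun n _ => ?_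
  have hidx : n * 2 ^ (j + k) = (n * 2 ^ k) * 2 ^ j := by
    apply PNat.coe_injective
    push_cast
    ring
  rw [map_smul, hidx, lemD hSn, smul_smul]
  congr 1
  rw [pow_add]
  field_simp

include hd hS1 hSn in
lemma density (y : E) (ε : ℝ) (hε : 0 < ε) :
    ∃ (F : Finset ℕ+) (a : ℕ+ → ℝ) (K : ℕ),
      ‖tvec S F a 0 - y‖ < ε ∧ ∀ k, K ≤ k → (S ^ k) (tvec S F a 0) = 0 := by
  classical
  -- truncation
  have hsy : HasSum (fun i : ℕ+ => lp.single 1 i (y i)) y :=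
    lp.hasSum_single ENNReal.one_ne_top y
  have htend := Metric.tendsto_nhds.mp hsy (ε/2) (by linarith)
  obtain ⟨F₀, hF₀⟩ := htend.exists
  rw [dist_eq_norm] at hF₀
  set a0 : ℕ+ → ℝ := fun n => y n with ha0
  set c : ℝ := ∑ n ∈ F₀, a0 n * (3:ℝ) ^ sz n with hc
  -- choose M
  set K₀ : ℕ := F₀.sup sz with hK₀
  obtain ⟨M₁, hM₁⟩ := exists_pow_lt_of_lt_one (x := (ε/2) / (|c| + 1)) (y := (3:ℝ)⁻¹)
    (by positivity) (by norm_num)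
  set M : ℕ := max (K₀ + 1) M₁ with hM
  have hM1 : 1 ≤ M := le_trans (by omega) (le_max_left _ _)
  have hMK : K₀ + 1 ≤ M := le_max_left _ _
  have hcM : |c| * ((3:ℝ) ^ M)⁻¹ < ε / 2 := by
    have h1 : ((3:ℝ)⁻¹) ^ M ≤ ((3:ℝ)⁻¹) ^ M₁ :=
      pow_le_pow_of_le_one (by norm_num) (by norm_num) (le_max_right _ _)
    have h2 : ((3:ℝ) ^ M)⁻¹ = ((3:ℝ)⁻¹) ^ M := by rw [inv_pow]
    have h3 : |c| * ((3:ℝ) ^ M)⁻¹ ≤ (|c| + 1) * ((3:ℝ)⁻¹) ^ M₁ := by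
      rw [h2]
      have := abs_nonneg c
      nlinarith [pow_nonneg (by norm_num : (0:ℝ) ≤ 3⁻¹) M, pow_nonneg (by norm_num : (0:ℝ) ≤ 3⁻¹) M₁]
    calc |c| * ((3:ℝ) ^ M)⁻¹ ≤ (|c| + 1) * ((3:ℝ)⁻¹) ^ M₁ := h3
      _ < ε / 2 := by
          rw [mul_comm, ← lt_div_iff₀ (by positivity)]
          exact hM₁
  -- correction index
  set q : ℕ+ := 2 ^ (M - 1) with hq
  have hszq : sz q = M := by
    have : ((q : ℕ+) : ℕ) = 2 ^ (M - 1) := by rw [hq]; push_cast; ring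
    unfold sz
    rw [this, Nat.size_pow]
    omega
  have hqF₀ : q ∉ F₀ := by
    intro hqm
    have := Finset.le_sup (f := sz) hqm
    rw [hszq, ← hK₀] at this
    omega
  set a : ℕ+ → ℝ := Function.update a0 q (-(c * ((3:ℝ) ^ M)⁻¹)) with ha
  refine ⟨insert q F₀, a, M, ?_, ?_⟩
  · have hsum : tvec S (insert q F₀) a 0 =
        a q • eVec q + ∑ n ∈ F₀, a0 n • eVec n := by
      rw [tvec_zero, Finset.sum_insert hqF₀]
      congr 1
      refine Finset.sum_congr rfl fun n hn => ?_
      rw [ha, Function.update_of_ne (ne_of_mem_of_not_mem hn hqF₀) _ _]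
    have hsingle : ∑ n ∈ F₀, a0 n • eVec n = ∑ n ∈ F₀, lp.single 1 n (y n) := by
      refine Finset.sum_congr rfl fun n _ => ?_
      rw [ha0, smul_eVec]
    have haq : |a q| = |c| * ((3:ℝ) ^ M)⁻¹ := by
      rw [ha, Function.update_self, abs_neg, abs_mul]
      congr 1
      exact abs_of_pos (by positivity)
    calc ‖tvec S (insert q F₀) a 0 - y‖
        = ‖(∑ n ∈ F₀, lp.single 1 n (y n) - y) + a q • eVec q‖ := by
          rw [hsum, hsingle]; congr 1; abel
      _ ≤ ‖∑ n ∈ F₀, lp.single 1 n (y n) - y‖ + ‖a q • eVec q‖ := norm_add_le _ _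
      _ < ε/2 + ε/2 := by
          apply add_lt_add hF₀
          rw [norm_smul_eVec, haq]
          exact hcM
      _ = ε := by ring
  · intro k hk
    have hszF : ∀ n ∈ insert q F₀, sz n ≤ k := by
      intro n hn
      rcases Finset.mem_insert.mp hn with h | h
      · rw [h, hszq]; exact hk
      · have := Finset.le_sup (f := sz) h
        omega
    rw [tvec_zero, map_sum]
    have heach : ∀ n ∈ insert q F₀,
        (S ^ k) (a n • eVec n) = (a n * (-((3:ℝ) ^ sz n))) • vv d := by
      intro n hn
      rw [map_smul, lemC hd hS1 hSn n k (hszF n hn), smul_smul]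
    rw [Finset.sum_congr rfl heach, ← Finset.sum_smul]
    convert zero_smul ℝ (vv d)
    rw [Finset.sum_insert hqF₀, hszq]
    have hrest : ∑ n ∈ F₀, a n * (-((3:ℝ) ^ sz n)) = -c := by
      rw [hc, ← Finset.sum_neg_distrib]
      refine Finset.sum_congr rfl fun n hn => ?_
      rw [ha, Function.update_of_ne (ne_of_mem_of_not_mem hn hqF₀) _ _]
      ring
    rw [hrest, ha, Function.update_self]
    have h3M : ((3:ℝ) ^ M) ≠ 0 := by positivity
    field_simp
    ring

end

end Stmt11

open Stmt11 Function Filter in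
/-- Let `(dₙ)` be the sequence with `dₙ = 3⁻ⁱ` whenever
`2^(i-1) ≤ n < 2^i` (`i ≥ 1`), and let `S` be the (unique) continuous linear operator
on `ℓ¹` with `S e₁ = −3 ∑ₙ dₙ eₙ` and `S eₙ = 3 e⌊n/2⌋` for `n ≥ 2`.  Then for
pairwise distinct positive integers `m 1, …, m N`, the operators `S^(m 1), …, S^(m N)`
are disjoint mixing on `ℓ¹`: every disjoint return set is cofinite in `ℕ`. -/
theorem stmt_11 (d : ℕ+ → ℝ)
    (hd : ∀ (i : ℕ) (n : ℕ+), 1 ≤ i → 2 ^ (i - 1) ≤ (n : ℕ) → (n : ℕ) < 2 ^ i →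
      d n = ((3 : ℝ) ^ i)⁻¹)
    (S : lp (fun _ : ℕ+ => ℝ) 1 →L[ℝ] lp (fun _ : ℕ+ => ℝ) 1)
    (hS1 : S (eVec 1) = (-3 : ℝ) • ∑' n : ℕ+, d n • eVec n)
    (hSn : ∀ n k : ℕ+, 2 ≤ (n : ℕ) → (k : ℕ) = (n : ℕ) / 2 →
      S (eVec n) = (3 : ℝ) • eVec k)
    {N : ℕ} (m : Fin N → ℕ) (hpos : ∀ i, 0 < m i) (hinj : Function.Injective m) :
    ∀ (U0 : Set (lp (fun _ : ℕ+ => ℝ) 1)) (U : Fin N → Set (lp (fun _ : ℕ+ => ℝ) 1)),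
      IsOpen U0 → U0.Nonempty → (∀ i, IsOpen (U i)) → (∀ i, (U i).Nonempty) →
      ({n : ℕ | ∃ z ∈ U0, ∀ i, ((⇑S)^[m i])^[n] z ∈ U i}ᶜ : Set ℕ).Finite := by
  intro U0 U hU0open hU0ne hUopen hUne
  classical
  have key : ∀ᶠ n in atTop, ∃ z ∈ U0, ∀ i, ((⇑S)^[m i])^[n] z ∈ U i := by
    obtain ⟨x0, hx0U⟩ := hU0ne
    obtain ⟨ε0, hε0, hball0⟩ := Metric.isOpen_iff.mp hU0open x0 hx0U
    have hys : ∀ i, ∃ y, ∃ ε : ℝ, 0 < ε ∧ Metric.ball y ε ⊆ U i := by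
      intro i
      obtain ⟨y, hy⟩ := hUne i
      obtain ⟨ε, hε, hb⟩ := Metric.isOpen_iff.mp (hUopen i) y hy
      exact ⟨y, ε, hε, hb⟩
    choose y ε hεpos hball using hys
    obtain ⟨F0, a0, K0, hx'close, hx'zero⟩ := density hd hS1 hSn x0 (ε0/2) (by linarith)
    have hdy := fun i => density hd hS1 hSn (y i) (ε i / 2) (half_pos (hεpos i))
    choose F a K hyclose hyzero using hdy
    set C : Fin N → ℝ := fun j => ∑ n ∈ F j, |a j n| with hC
    set Ctot : ℝ := ∑ j, C j with hCt
    have hCnn : ∀ j, 0 ≤ C j := fun j => Finset.sum_nonneg (fun _ _ => abs_nonneg _)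
    have hCtnn : 0 ≤ Ctot := Finset.sum_nonneg fun j _ => hCnn j
    have htend : Tendsto (fun n : ℕ => ((3:ℝ)⁻¹)^n * Ctot) atTop (nhds 0) := by
      have h0 := tendsto_pow_atTop_nhds_zero_of_lt_one
        (by norm_num : (0:ℝ) ≤ 3⁻¹) (by norm_num : (3:ℝ)⁻¹ < 1)
      simpa using h0.mul_const Ctot
    have hev0 : ∀ᶠ n : ℕ in atTop, ((3:ℝ)⁻¹)^n * Ctot < ε0/2 :=
      htend.eventually (gt_mem_nhds (by linarith))
    have hevi : ∀ᶠ n : ℕ in atTop, ∀ i, ((3:ℝ)⁻¹)^n * Ctot < ε i / 2 :=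
      eventually_all.mpr fun i => htend.eventually (gt_mem_nhds (half_pos (hεpos i)))
    have hevK0 : ∀ᶠ n : ℕ in atTop, K0 ≤ n := eventually_ge_atTop K0
    have hevK : ∀ᶠ n : ℕ in atTop, ∀ i, K i ≤ n :=
      eventually_all.mpr fun i => eventually_ge_atTop (K i)
    filter_upwards [hev0, hevi, hevK0, hevK] with n h0 hi hK0n hKin
    set x' : E := tvec S F0 a0 0 with hx'
    set z : E := x' + ∑ j, tvec S (F j) (a j) (m j * n) with hz
    have hnmul : ∀ j : Fin N, n ≤ m j * n := fun j => Nat.le_mul_of_pos_left n (hpos j)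
    have hnorm : ∀ (j : Fin N) (k : ℕ), n ≤ k →
        ‖tvec S (F j) (a j) k‖ ≤ ((3:ℝ)⁻¹)^n * C j := by
      intro j k hk
      calc ‖tvec S (F j) (a j) k‖ ≤ ((3:ℝ)^k)⁻¹ * C j := norm_tvec _ _ _
        _ = ((3:ℝ)⁻¹)^k * C j := by rw [inv_pow]
        _ ≤ ((3:ℝ)⁻¹)^n * C j := by
            apply mul_le_mul_of_nonneg_right _ (hCnn j)
            exact pow_le_pow_of_le_one (by norm_num) (by norm_num) hk
    refine ⟨z, ?_, ?_⟩
    · apply hball0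
      rw [Metric.mem_ball, dist_eq_norm]
      have h1 : ‖z - x0‖ ≤ ‖∑ j, tvec S (F j) (a j) (m j * n)‖ + ‖x' - x0‖ := by
        have hre : z - x0 = (∑ j, tvec S (F j) (a j) (m j * n)) + (x' - x0) := by
          rw [hz]; abel
        rw [hre]; exact norm_add_le _ _
      have h2 : ‖∑ j, tvec S (F j) (a j) (m j * n)‖ ≤ ((3:ℝ)⁻¹)^n * Ctot := by
        calc ‖∑ j, tvec S (F j) (a j) (m j * n)‖
            ≤ ∑ j, ‖tvec S (F j) (a j) (m j * n)‖ := norm_sum_le _ _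
          _ ≤ ∑ j, ((3:ℝ)⁻¹)^n * C j :=
              Finset.sum_le_sum fun j _ => hnorm j _ (hnmul j)
          _ = ((3:ℝ)⁻¹)^n * Ctot := by rw [hCt, Finset.mul_sum]
      linarith
    · intro i
      have hit : ((⇑S)^[m i])^[n] z = (S ^ (m i * n)) z := by
        rw [← Function.iterate_mul, ← FunLike.coe_pow_eq_iterate]
      rw [hit]
      apply hball i
      rw [Metric.mem_ball, dist_eq_norm]
      have hx'z : (S ^ (m i * n)) x' = 0 := hx'zero _ (le_trans hK0n (hnmul i))
      have hterm_i : (S ^ (m i * n)) (tvec S (F i) (a i) (m i * n)) = tvec S (F i) (a i) 0 := by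
        have h := S_pow_tvec hSn (F i) (a i) (m i * n) 0
        rwa [add_zero] at h
      have hsz : (S ^ (m i * n)) z = tvec S (F i) (a i) 0 +
          ∑ j ∈ Finset.univ.erase i, (S ^ (m i * n)) (tvec S (F j) (a j) (m j * n)) := by
        rw [hz, map_add, hx'z, zero_add, map_sum,
          ← Finset.add_sum_erase _ _ (Finset.mem_univ i), hterm_i]
      have hterm : ∀ j ∈ Finset.univ.erase i,
          ‖(S ^ (m i * n)) (tvec S (F j) (a j) (m j * n))‖ ≤ ((3:ℝ)⁻¹)^n * C j := by
        intro j hj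
        have hji : j ≠ i := Finset.ne_of_mem_erase hj
        have hmji : m j ≠ m i := fun h => hji (hinj h)
        rcases lt_or_gt_of_ne hmji with hlt | hgt
        · have hle : m j * n ≤ m i * n := Nat.mul_le_mul_right n hlt.le
          have hsplit : m i * n = (m i - m j) * n + m j * n := by
            rw [Nat.sub_mul]; omega
          rw [hsplit, pow_add, ContinuousLinearMap.mul_apply]
          have h1 : (S ^ (m j * n)) (tvec S (F j) (a j) (m j * n)) = tvec S (F j) (a j) 0 := by
            have h := S_pow_tvec hSn (F j) (a j) (m j * n) 0
            rwa [add_zero] at h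
          rw [h1]
          have h2 : (S ^ ((m i - m j) * n)) (tvec S (F j) (a j) 0) = 0 := by
            apply hyzero j
            calc K j ≤ n := hKin j
              _ ≤ (m i - m j) * n := Nat.le_mul_of_pos_left n (by omega)
          rw [h2, norm_zero]
          positivity
        · have hle : m i * n ≤ m j * n := Nat.mul_le_mul_right n hgt.le
          have hsplit : m j * n = m i * n + (m j - m i) * n := by
            rw [Nat.sub_mul]; omega
          rw [hsplit, S_pow_tvec hSn]
          exact hnorm j _ (Nat.le_mul_of_pos_left n (by omega))
      have hsum_bound : ‖∑ j ∈ Finset.univ.erase i,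
          (S ^ (m i * n)) (tvec S (F j) (a j) (m j * n))‖ ≤ ((3:ℝ)⁻¹)^n * Ctot := by
        calc ‖∑ j ∈ Finset.univ.erase i, (S ^ (m i * n)) (tvec S (F j) (a j) (m j * n))‖
            ≤ ∑ j ∈ Finset.univ.erase i,
              ‖(S ^ (m i * n)) (tvec S (F j) (a j) (m j * n))‖ := norm_sum_le _ _
          _ ≤ ∑ j ∈ Finset.univ.erase i, ((3:ℝ)⁻¹)^n * C j := Finset.sum_le_sum hterm
          _ ≤ ∑ j, ((3:ℝ)⁻¹)^n * C j := by
              apply Finset.sum_le_sum_of_subset_of_nonneg (Finset.erase_subset _ _)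
              intro j _ _
              have := hCnn j
              positivity
          _ = ((3:ℝ)⁻¹)^n * Ctot := by rw [hCt, Finset.mul_sum]
      have hfin : ‖(S ^ (m i * n)) z - y i‖ ≤
          ‖∑ j ∈ Finset.univ.erase i, (S ^ (m i * n)) (tvec S (F j) (a j) (m j * n))‖ +
          ‖tvec S (F i) (a i) 0 - y i‖ := by
        have hre : (S ^ (m i * n)) z - y i =
            (∑ j ∈ Finset.univ.erase i, (S ^ (m i * n)) (tvec S (F j) (a j) (m j * n))) +
            (tvec S (F i) (a i) 0 - y i) := by
          rw [hsz]; abel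
        rw [hre]; exact norm_add_le _ _
      have := hyclose i
      have := hi i
      linarith
  have hmem : {n : ℕ | ∃ z ∈ U0, ∀ i, ((⇑S)^[m i])^[n] z ∈ U i} ∈ Filter.cofinite := by
    rw [Nat.cofinite_eq_atTop]; exact key
  exact Filter.mem_cofinite.mp hmem
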